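/- For every δ ∈ (0,1), the potential F_δ(r) = F_δ^obs(r) + (1−r²)/2 satisfies assumptions (A1)-(A2) with q = 1: there exists β₀ ∈ ℝ with F_δ(r) ≥ β₀ for all r ∈ ℝ; F₁ := F_δ^obs is twice continuously differentiable, nonnegative and convex; F₂(r) := (1−r²)/2 is twice continuously differentiable with |F₂'(r)| = |r|; and there exist constants α > 0 and β ≥ 0 (depending on δ) such that for all r ∈ ℝ: |φ_δ^obs(r)| ≤ α·|r| + β, |φ_δ^obs(r)| ≤ α·F_δ^obs(r) + β, and |r·φ_δ^obs(r)| ≤ α·F_δ^obs(r) + β. -/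

import Mathlib

open Real Set

/-- The regularized double obstacle potential `F_δ^obs`. -/
noncomputable def Fobsδ (δ : ℝ) (r : ℝ) : ℝ :=
  if 1 + δ ≤ r then (1/(2*δ)) * (r - (1 + δ/2))^2 + δ/24
  else if 1 < r then (1/(6*δ^2)) * (r - 1)^3
  else if -1 ≤ r then 0
  else if -1 - δ < r then -(1/(6*δ^2)) * (r + 1)^3
  else (1/(2*δ)) * (r + (1 + δ/2))^2 + δ/24

noncomputable def Paux (t : ℝ) : ℝ := (t^3 + |t|^3)/2
noncomputable def P1aux (t : ℝ) : ℝ := (3*t^2 + 3*(t*|t|))/2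
noncomputable def P2aux (t : ℝ) : ℝ := 3*t + 3*|t|

/-- auxiliary closed form for the derivative -/
noncomputable def φδ (δ : ℝ) (r : ℝ) : ℝ :=
  if 1 + δ ≤ r then (1/δ) * (r - (1 + δ/2))
  else if 1 < r then (1/(2*δ^2)) * (r - 1)^2
  else if -1 ≤ r then 0
  else if -1 - δ < r then -(1/(2*δ^2)) * (r + 1)^2
  else (1/δ) * (r + (1 + δ/2))

lemma hasDerivAt_mul_abs (t : ℝ) : HasDerivAt (fun x : ℝ => x * |x|) (2 * |t|) t := by
  rcases lt_trichotomy t 0 with ht | rfl | ht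
  · have h : HasDerivAt (fun x : ℝ => -(x^2)) (-(2*t)) t := by
      exact (hasDerivAt_pow 2 t).neg.congr_deriv (by norm_num)
    have he : (fun x : ℝ => x * |x|) =ᶠ[nhds t] fun x => -(x^2) := by
      filter_upwards [Iio_mem_nhds ht] with x hx
      rw [abs_of_neg hx]; ring
    have h2 := h.congr_of_eventuallyEq he
    rw [show (2*|t| : ℝ) = -(2*t) by rw [abs_of_neg ht]; ring]
    exact h2
  · rw [hasDerivAt_iff_isLittleO, Asymptotics.isLittleO_iff]
    intro c hc
    filter_upwards [eventually_abs_sub_lt 0 hc] with x hx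
    rw [sub_zero] at hx
    simp only [abs_zero, mul_zero, zero_mul, sub_zero, smul_eq_mul]
    rw [Real.norm_eq_abs, Real.norm_eq_abs, abs_mul, abs_abs]
    nlinarith [abs_nonneg x]
  · have h : HasDerivAt (fun x : ℝ => x^2) (2*t) t := by simpa using hasDerivAt_pow 2 t
    have he : (fun x : ℝ => x * |x|) =ᶠ[nhds t] fun x => x^2 := by
      filter_upwards [Ioi_mem_nhds ht] with x hx
      rw [abs_of_pos hx]; ring
    have h2 := h.congr_of_eventuallyEq he
    rw [show (2*|t| : ℝ) = 2*t by rw [abs_of_pos ht]]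
    exact h2

lemma hasDerivAt_abs_cube (t : ℝ) : HasDerivAt (fun x : ℝ => |x|^3) (3*(t*|t|)) t := by
  have h := (hasDerivAt_id t).mul (hasDerivAt_mul_abs t)
  have he : (fun x : ℝ => |x|^3) = fun x : ℝ => x * (x * |x|) := by
    funext x
    rcases abs_cases x with ⟨h1, _⟩ | ⟨h1, _⟩ <;> rw [h1] <;> ring
  rw [he]
  exact h.congr_deriv (by simp only [id_eq]; ring)

lemma hasDerivAt_Paux (t : ℝ) : HasDerivAt Paux (P1aux t) t := by
  have h := ((hasDerivAt_pow 3 t).add (hasDerivAt_abs_cube t)).div_const 2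
  unfold Paux P1aux
  exact h.congr_deriv (by norm_num <;> ring)

lemma hasDerivAt_P1aux (t : ℝ) : HasDerivAt P1aux (P2aux t) t := by
  have h := (((hasDerivAt_pow 2 t).const_mul (3:ℝ)).add ((hasDerivAt_mul_abs t).const_mul (3:ℝ))).div_const 2
  unfold P1aux P2aux
  exact h.congr_deriv (by norm_num <;> ring)

lemma contDiff_Paux : ContDiff ℝ 2 Paux := by
  have hd : deriv Paux = P1aux := funext fun t => (hasDerivAt_Paux t).deriv
  have hd2 : deriv P1aux = P2aux := funext fun t => (hasDerivAt_P1aux t).deriv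
  rw [show ((2:WithTop ℕ∞)) = (1 + 1 : WithTop ℕ∞) by norm_num, contDiff_succ_iff_deriv]
  refine ⟨fun t => (hasDerivAt_Paux t).differentiableAt, by simp, ?_⟩
  rw [hd, contDiff_one_iff_deriv, hd2]
  refine ⟨fun t => (hasDerivAt_P1aux t).differentiableAt, ?_⟩
  unfold P2aux
  exact (continuous_const.mul continuous_id).add (continuous_const.mul continuous_abs)

lemma Fobs_eq {δ : ℝ} (hδ : 0 < δ) (r : ℝ) :
    Fobsδ δ r = (Paux (r-1) - Paux (r-1-δ) + Paux (-r-1) - Paux (-r-1-δ)) / (6*δ^2) := by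
  have hδ' : δ ≠ 0 := ne_of_gt hδ
  unfold Fobsδ Paux
  split_ifs with h1 h2 h3 h4
  · rw [abs_of_nonneg (show (0:ℝ) ≤ r-1 by linarith),
        abs_of_nonneg (show (0:ℝ) ≤ r-1-δ by linarith),
        abs_of_nonpos (show -r-1 ≤ (0:ℝ) by linarith),
        abs_of_nonpos (show -r-1-δ ≤ (0:ℝ) by linarith)]
    field_simp
    ring
  · rw [abs_of_nonneg (show (0:ℝ) ≤ r-1 by linarith),
        abs_of_nonpos (show r-1-δ ≤ (0:ℝ) by linarith),
        abs_of_nonpos (show -r-1 ≤ (0:ℝ) by linarith),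
        abs_of_nonpos (show -r-1-δ ≤ (0:ℝ) by linarith)]
    field_simp
    ring
  · rw [abs_of_nonpos (show r-1 ≤ (0:ℝ) by linarith),
        abs_of_nonpos (show r-1-δ ≤ (0:ℝ) by linarith),
        abs_of_nonpos (show -r-1 ≤ (0:ℝ) by linarith),
        abs_of_nonpos (show -r-1-δ ≤ (0:ℝ) by linarith)]
    field_simp
    ring
  · rw [abs_of_nonpos (show r-1 ≤ (0:ℝ) by linarith),
        abs_of_nonpos (show r-1-δ ≤ (0:ℝ) by linarith),
        abs_of_nonneg (show (0:ℝ) ≤ -r-1 by linarith),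
        abs_of_nonpos (show -r-1-δ ≤ (0:ℝ) by linarith)]
    field_simp
    ring
  · rw [abs_of_nonpos (show r-1 ≤ (0:ℝ) by linarith),
        abs_of_nonpos (show r-1-δ ≤ (0:ℝ) by linarith),
        abs_of_nonneg (show (0:ℝ) ≤ -r-1 by linarith),
        abs_of_nonneg (show (0:ℝ) ≤ -r-1-δ by linarith)]
    field_simp
    ring

lemma φδ_eq {δ : ℝ} (hδ : 0 < δ) (r : ℝ) :
    φδ δ r = (P1aux (r-1) - P1aux (r-1-δ) - P1aux (-r-1) + P1aux (-r-1-δ)) / (6*δ^2) := by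
  have hδ' : δ ≠ 0 := ne_of_gt hδ
  unfold φδ P1aux
  split_ifs with h1 h2 h3 h4
  · rw [abs_of_nonneg (show (0:ℝ) ≤ r-1 by linarith),
        abs_of_nonneg (show (0:ℝ) ≤ r-1-δ by linarith),
        abs_of_nonpos (show -r-1 ≤ (0:ℝ) by linarith),
        abs_of_nonpos (show -r-1-δ ≤ (0:ℝ) by linarith)]
    field_simp
    ring
  · rw [abs_of_nonneg (show (0:ℝ) ≤ r-1 by linarith),
        abs_of_nonpos (show r-1-δ ≤ (0:ℝ) by linarith),
        abs_of_nonpos (show -r-1 ≤ (0:ℝ) by linarith),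
        abs_of_nonpos (show -r-1-δ ≤ (0:ℝ) by linarith)]
    field_simp
    ring
  · rw [abs_of_nonpos (show r-1 ≤ (0:ℝ) by linarith),
        abs_of_nonpos (show r-1-δ ≤ (0:ℝ) by linarith),
        abs_of_nonpos (show -r-1 ≤ (0:ℝ) by linarith),
        abs_of_nonpos (show -r-1-δ ≤ (0:ℝ) by linarith)]
    field_simp
    ring
  · rw [abs_of_nonpos (show r-1 ≤ (0:ℝ) by linarith),
        abs_of_nonpos (show r-1-δ ≤ (0:ℝ) by linarith),
        abs_of_nonneg (show (0:ℝ) ≤ -r-1 by linarith),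
        abs_of_nonpos (show -r-1-δ ≤ (0:ℝ) by linarith)]
    field_simp
    ring
  · rw [abs_of_nonpos (show r-1 ≤ (0:ℝ) by linarith),
        abs_of_nonpos (show r-1-δ ≤ (0:ℝ) by linarith),
        abs_of_nonneg (show (0:ℝ) ≤ -r-1 by linarith),
        abs_of_nonneg (show (0:ℝ) ≤ -r-1-δ by linarith)]
    field_simp
    ring

lemma hasDerivAt_PauxCombo {δ : ℝ} (r : ℝ) :
    HasDerivAt (fun x : ℝ => (Paux (x-1) - Paux (x-1-δ) + Paux (-x-1) - Paux (-x-1-δ)) / (6*δ^2))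
      ((P1aux (r-1) - P1aux (r-1-δ) - P1aux (-r-1) + P1aux (-r-1-δ)) / (6*δ^2)) r := by
  have h1 : HasDerivAt (fun x : ℝ => Paux (x-1)) (P1aux (r-1)) r := by
    exact ((hasDerivAt_Paux (r-1)).comp r ((hasDerivAt_id r).sub_const 1)).congr_deriv (mul_one _)
  have h2 : HasDerivAt (fun x : ℝ => Paux (x-1-δ)) (P1aux (r-1-δ)) r := by
    exact ((hasDerivAt_Paux (r-1-δ)).comp r (((hasDerivAt_id r).sub_const 1).sub_const δ)).congr_deriv (mul_one _)
  have h3 : HasDerivAt (fun x : ℝ => Paux (-x-1)) (P1aux (-r-1) * (-1)) r := by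
    exact (hasDerivAt_Paux (-r-1)).comp r (((hasDerivAt_id r).neg).sub_const 1)
  have h4 : HasDerivAt (fun x : ℝ => Paux (-x-1-δ)) (P1aux (-r-1-δ) * (-1)) r := by
    exact (hasDerivAt_Paux (-r-1-δ)).comp r ((((hasDerivAt_id r).neg).sub_const 1).sub_const δ)
  have H := (((h1.sub h2).add h3).sub h4).div_const (6*δ^2)
  exact H.congr_deriv (by ring)

lemma hasDerivAt_Fobsδ {δ : ℝ} (hδ : 0 < δ) (r : ℝ) :
    HasDerivAt (Fobsδ δ) (φδ δ r) r := by
  rw [φδ_eq hδ r]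
  exact (hasDerivAt_PauxCombo r).congr_of_eventuallyEq
    (Filter.Eventually.of_forall fun x => Fobs_eq hδ x)

lemma deriv_Fobsδ {δ : ℝ} (hδ : 0 < δ) : deriv (Fobsδ δ) = φδ δ :=
  funext fun r => (hasDerivAt_Fobsδ hδ r).deriv

lemma hasDerivAt_P1Combo {δ : ℝ} (r : ℝ) :
    HasDerivAt (fun x : ℝ => (P1aux (x-1) - P1aux (x-1-δ) - P1aux (-x-1) + P1aux (-x-1-δ)) / (6*δ^2))
      ((P2aux (r-1) - P2aux (r-1-δ) + P2aux (-r-1) - P2aux (-r-1-δ)) / (6*δ^2)) r := by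
  have h1 : HasDerivAt (fun x : ℝ => P1aux (x-1)) (P2aux (r-1)) r := by
    exact ((hasDerivAt_P1aux (r-1)).comp r ((hasDerivAt_id r).sub_const 1)).congr_deriv (mul_one _)
  have h2 : HasDerivAt (fun x : ℝ => P1aux (x-1-δ)) (P2aux (r-1-δ)) r := by
    exact ((hasDerivAt_P1aux (r-1-δ)).comp r (((hasDerivAt_id r).sub_const 1).sub_const δ)).congr_deriv (mul_one _)
  have h3 : HasDerivAt (fun x : ℝ => P1aux (-x-1)) (P2aux (-r-1) * (-1)) r := by
    exact (hasDerivAt_P1aux (-r-1)).comp r (((hasDerivAt_id r).neg).sub_const 1)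
  have h4 : HasDerivAt (fun x : ℝ => P1aux (-x-1-δ)) (P2aux (-r-1-δ) * (-1)) r := by
    exact (hasDerivAt_P1aux (-r-1-δ)).comp r ((((hasDerivAt_id r).neg).sub_const 1).sub_const δ)
  have H := (((h1.sub h2).sub h3).add h4).div_const (6*δ^2)
  exact H.congr_deriv (by ring)

lemma P2aux_mono : Monotone P2aux := by
  intro a b hab
  unfold P2aux
  rcases abs_cases a with ⟨e1, _⟩ | ⟨e1, _⟩ <;> rcases abs_cases b with ⟨e2, _⟩ | ⟨e2, _⟩ <;>
    rw [e1, e2] <;> linarith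

lemma mul_nonneg_of_nonpos_nonpos' {a b : ℝ} (ha : a ≤ 0) (hb : b ≤ 0) : 0 ≤ a * b := by
  nlinarith

set_option maxHeartbeats 2000000 in
/-- For every `δ ∈ (0,1)`, `F_δ(r) = F_δ^obs(r) + (1−r²)/2` satisfies assumptions
(A1)–(A2) with `q = 1`: a lower bound `β₀`; `F₁ = F_δ^obs` is `C²`, nonnegative and
convex; `F₂(r) = (1−r²)/2` is `C²` with `|F₂'(r)| = |r|`; and `φ_δ^obs` satisfies the
linear growth estimates with constants depending on `δ`. -/
theorem Fobsδ_satisfies_assumptions (δ : ℝ) (hδ : δ ∈ Set.Ioo (0:ℝ) 1) :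
    (∃ β₀ : ℝ, ∀ r : ℝ, β₀ ≤ Fobsδ δ r + (1 - r^2)/2) ∧
    ContDiff ℝ 2 (Fobsδ δ) ∧
    (∀ r : ℝ, 0 ≤ Fobsδ δ r) ∧
    ConvexOn ℝ Set.univ (Fobsδ δ) ∧
    ContDiff ℝ 2 (fun r : ℝ => (1 - r^2)/2) ∧
    (∀ r : ℝ, |deriv (fun s : ℝ => (1 - s^2)/2) r| = |r|) ∧
    (∃ α > (0:ℝ), ∃ β ≥ (0:ℝ), ∀ r : ℝ,
      |deriv (Fobsδ δ) r| ≤ α * |r| + β ∧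
      |deriv (Fobsδ δ) r| ≤ α * Fobsδ δ r + β ∧
      |r * deriv (Fobsδ δ) r| ≤ α * Fobsδ δ r + β) := by
  obtain ⟨hδ0, hδ1⟩ := hδ
  have hδ' : δ ≠ 0 := ne_of_gt hδ0
  have h1δ : (0:ℝ) < 1 - δ := by linarith
  -- smoothness of Fobsδ
  have hsmooth : ContDiff ℝ 2 (Fobsδ δ) := by
    have hrepr : Fobsδ δ
        = fun r => (Paux (r-1) - Paux (r-1-δ) + Paux (-r-1) - Paux (-r-1-δ)) / (6*δ^2) :=
      funext (Fobs_eq hδ0)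
    rw [hrepr]
    have cP : ContDiff ℝ 2 Paux := contDiff_Paux
    have i1 : ContDiff ℝ 2 (fun r : ℝ => Paux (r-1)) :=
      cP.comp (contDiff_id.sub contDiff_const)
    have i2 : ContDiff ℝ 2 (fun r : ℝ => Paux (r-1-δ)) :=
      cP.comp ((contDiff_id.sub contDiff_const).sub contDiff_const)
    have i3 : ContDiff ℝ 2 (fun r : ℝ => Paux (-r-1)) :=
      cP.comp (contDiff_id.neg.sub contDiff_const)
    have i4 : ContDiff ℝ 2 (fun r : ℝ => Paux (-r-1-δ)) :=
      cP.comp ((contDiff_id.neg.sub contDiff_const).sub contDiff_const)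
    exact (((i1.sub i2).add i3).sub i4).div_const _
  -- nonnegativity
  have hnonneg : ∀ r : ℝ, 0 ≤ Fobsδ δ r := by
    intro r
    unfold Fobsδ
    split_ifs with h1 h2 h3 h4
    · positivity
    · have : (0:ℝ) ≤ (r-1)^3 := pow_nonneg (by linarith) 3
      positivity
    · exact le_refl 0
    · have h5 : (r+1)^3 ≤ 0 := Odd.pow_nonpos (⟨1, rfl⟩ : Odd 3) (by linarith)
      nlinarith [mul_nonneg (show (0:ℝ) ≤ 1/(6*δ^2) by positivity) (neg_nonneg.mpr h5)]
    · positivity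
  refine ⟨?_, hsmooth, hnonneg, ?_, ?_, ?_, ?_⟩
  -- (A1) lower bound
  · refine ⟨-(3 + 9/(8*(1-δ))), fun r => ?_⟩
    have h9 : (0:ℝ) < 9/(8*(1-δ)) := by positivity
    unfold Fobsδ
    split_ifs with h1 h2 h3 h4
    · have key : (24*δ*(1-δ)) * (-(3 + 9/(8*(1-δ))))
          ≤ (24*δ*(1-δ)) * ((1/(2*δ))*(r-(1+δ/2))^2 + δ/24 + (1-r^2)/2) := by
        have e1 : (24*δ*(1-δ)) * (-(3 + 9/(8*(1-δ)))) = -72*δ*(1-δ) - 27*δ := by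
          field_simp; ring
        have e2 : (24*δ*(1-δ)) * ((1/(2*δ))*(r-(1+δ/2))^2 + δ/24 + (1-r^2)/2)
            = 12*(1-δ)*(r-(1+δ/2))^2 + δ^2*(1-δ) + 12*δ*(1-δ)*(1-r^2) := by
          field_simp; ring
        rw [e1, e2]
        nlinarith [sq_nonneg ((1-δ)*r - (1+δ/2)), mul_pos hδ0 h1δ, sq_nonneg r,
          mul_nonneg (mul_nonneg hδ0.le h1δ.le) (sq_nonneg r),
          mul_nonneg hδ0.le (mul_nonneg h1δ.le (show (0:ℝ) ≤ 5 + δ by linarith))]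
      have := le_of_mul_le_mul_left key (by positivity : (0:ℝ) < 24*δ*(1-δ))
      linarith
    · nlinarith [h9, mul_nonneg (show (0:ℝ) ≤ 1/(6*δ^2) by positivity)
        (pow_nonneg (show (0:ℝ) ≤ r-1 by linarith) 3),
        mul_nonneg (show (0:ℝ) ≤ 2-r by linarith) (show (0:ℝ) ≤ 2+r by linarith)]
    · nlinarith [h9, mul_nonneg (show (0:ℝ) ≤ 1-r by linarith) (show (0:ℝ) ≤ 1+r by linarith)]
    · nlinarith [h9, mul_nonneg (show (0:ℝ) ≤ 1/(6*δ^2) by positivity)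
        (neg_nonneg.mpr (Odd.pow_nonpos (⟨1, rfl⟩ : Odd 3) (show r+1 ≤ (0:ℝ) by linarith))),
        mul_nonneg (show (0:ℝ) ≤ 2-r by linarith) (show (0:ℝ) ≤ 2+r by linarith)]
    · have key : (24*δ*(1-δ)) * (-(3 + 9/(8*(1-δ))))
          ≤ (24*δ*(1-δ)) * ((1/(2*δ))*(r+(1+δ/2))^2 + δ/24 + (1-r^2)/2) := by
        have e1 : (24*δ*(1-δ)) * (-(3 + 9/(8*(1-δ)))) = -72*δ*(1-δ) - 27*δ := by
          field_simp; ring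
        have e2 : (24*δ*(1-δ)) * ((1/(2*δ))*(r+(1+δ/2))^2 + δ/24 + (1-r^2)/2)
            = 12*(1-δ)*(r+(1+δ/2))^2 + δ^2*(1-δ) + 12*δ*(1-δ)*(1-r^2) := by
          field_simp; ring
        rw [e1, e2]
        nlinarith [sq_nonneg ((1-δ)*r + (1+δ/2)), mul_pos hδ0 h1δ, sq_nonneg r,
          mul_nonneg (mul_nonneg hδ0.le h1δ.le) (sq_nonneg r),
          mul_nonneg hδ0.le (mul_nonneg h1δ.le (show (0:ℝ) ≤ 5 + δ by linarith))]
      have := le_of_mul_le_mul_left key (by positivity : (0:ℝ) < 24*δ*(1-δ))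
      linarith
  -- convexity
  · refine convexOn_of_hasDerivWithinAt2_nonneg convex_univ
      (f' := fun x : ℝ => (P1aux (x-1) - P1aux (x-1-δ) - P1aux (-x-1) + P1aux (-x-1-δ)) / (6*δ^2))
      (f'' := fun x : ℝ => (P2aux (x-1) - P2aux (x-1-δ) + P2aux (-x-1) - P2aux (-x-1-δ)) / (6*δ^2))
      hsmooth.continuous.continuousOn (fun x _ => ?_) (fun x _ => ?_) (fun x _ => ?_)
    · exact ((hasDerivAt_Fobsδ hδ0 x).congr_deriv (φδ_eq hδ0 x)).hasDerivWithinAt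
    · exact (hasDerivAt_P1Combo x).hasDerivWithinAt
    · apply div_nonneg _ (by positivity)
      have m1 := P2aux_mono (show x-1-δ ≤ x-1 by linarith)
      have m2 := P2aux_mono (show -x-1-δ ≤ -x-1 by linarith)
      linarith
  -- smoothness of F2
  · exact (contDiff_const.sub (contDiff_id.pow 2)).div_const 2
  -- derivative of F2
  · intro r
    have h : HasDerivAt (fun s : ℝ => (1 - s^2)/2) (-r) r := by
      have h0 := ((hasDerivAt_const r (1:ℝ)).sub (hasDerivAt_pow 2 r)).div_const 2
      exact h0.congr_deriv (by norm_num <;> ring)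
    rw [h.deriv, abs_neg]
  -- growth estimates
  · refine ⟨20/δ^2, by positivity, 20, by norm_num, fun r => ?_⟩
    rw [deriv_Fobsδ hδ0]
    unfold Fobsδ φδ
    split_ifs with h1 h2 h3 h4
    · -- r ≥ 1 + δ
      have hx : (0:ℝ) ≤ r - (1+δ/2) := by linarith
      have hx2 : (0:ℝ) ≤ r - (1+δ/2) - δ/2 := by linarith
      have hr : (0:ℝ) ≤ r := by linarith
      have hφ : (0:ℝ) ≤ (1/δ) * (r - (1+δ/2)) := mul_nonneg (by positivity) hx
      rw [abs_of_nonneg hφ, abs_of_nonneg hr, abs_of_nonneg (mul_nonneg hr hφ)]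
      refine ⟨?_, ?_, ?_⟩
      · have key : δ^2 * ((1/δ) * (r - (1+δ/2))) ≤ δ^2 * (20/δ^2 * r + 20) := by
          have e1 : δ^2 * ((1/δ) * (r - (1+δ/2))) = δ*(r - (1+δ/2)) := by
            field_simp; try ring
          have e2 : δ^2 * (20/δ^2 * r + 20) = 20*r + 20*δ^2 := by field_simp; try ring
          rw [e1, e2]; nlinarith
        exact le_of_mul_le_mul_left key (by positivity)
      · have key : δ^3 * ((1/δ) * (r - (1+δ/2)))
            ≤ δ^3 * (20/δ^2 * ((1/(2*δ))*(r-(1+δ/2))^2 + δ/24) + 20) := by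
          have e1 : δ^3 * ((1/δ) * (r - (1+δ/2))) = δ^2*(r - (1+δ/2)) := by
            field_simp; try ring
          have e2 : δ^3 * (20/δ^2 * ((1/(2*δ))*(r-(1+δ/2))^2 + δ/24) + 20)
              = 10*(r-(1+δ/2))^2 + (5/6)*δ^2 + 20*δ^3 := by field_simp; try ring
          rw [e1, e2]
          nlinarith [mul_nonneg hx2 hx, mul_nonneg (mul_nonneg hδ0.le h1δ.le) hx,
            mul_nonneg (sq_nonneg δ) hx, sq_nonneg (r - (1+δ/2))]
        exact le_of_mul_le_mul_left key (by positivity)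
      · have key : δ^3 * (r * ((1/δ) * (r - (1+δ/2))))
            ≤ δ^3 * (20/δ^2 * ((1/(2*δ))*(r-(1+δ/2))^2 + δ/24) + 20) := by
          have e1 : δ^3 * (r * ((1/δ) * (r - (1+δ/2)))) = δ^2*(r*(r - (1+δ/2))) := by
            field_simp; try ring
          have e2 : δ^3 * (20/δ^2 * ((1/(2*δ))*(r-(1+δ/2))^2 + δ/24) + 20)
              = 10*(r-(1+δ/2))^2 + (5/6)*δ^2 + 20*δ^3 := by field_simp; try ring
          rw [e1, e2]
          nlinarith [mul_nonneg hx2 hx, mul_nonneg hδ0.le (mul_nonneg hx2 hx),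
            mul_nonneg (mul_nonneg h1δ.le hx) hx,
            mul_nonneg (mul_nonneg (show (0:ℝ) ≤ 1 - δ*δ by nlinarith) hx) hx,
            mul_nonneg (mul_nonneg hδ0.le hδ0.le) hx, sq_nonneg (r - (1+δ/2))]
        exact le_of_mul_le_mul_left key (by positivity)
    · -- 1 < r < 1 + δ
      have hs0 : (0:ℝ) ≤ r - 1 := by linarith
      have hsδ : r - 1 ≤ δ := by linarith
      have hr : (0:ℝ) ≤ r := by linarith
      have hφ : (0:ℝ) ≤ (1/(2*δ^2)) * (r-1)^2 := by positivity
      have hsq : (0:ℝ) ≤ δ*δ - (r-1)*(r-1) := by nlinarith [mul_self_le_mul_self hs0 hsδ]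
      rw [abs_of_nonneg hφ, abs_of_nonneg hr, abs_of_nonneg (mul_nonneg hr hφ)]
      refine ⟨?_, ?_, ?_⟩
      · have key : δ^2 * ((1/(2*δ^2)) * (r-1)^2) ≤ δ^2 * (20/δ^2 * r + 20) := by
          have e1 : δ^2 * ((1/(2*δ^2)) * (r-1)^2) = (r-1)^2/2 := by field_simp; try ring
          have e2 : δ^2 * (20/δ^2 * r + 20) = 20*r + 20*δ^2 := by field_simp; try ring
          rw [e1, e2]; nlinarith [sq_nonneg δ]
        exact le_of_mul_le_mul_left key (by positivity)
      · have key : δ^4 * ((1/(2*δ^2)) * (r-1)^2)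
            ≤ δ^4 * (20/δ^2 * ((1/(6*δ^2)) * (r-1)^3) + 20) := by
          have e1 : δ^4 * ((1/(2*δ^2)) * (r-1)^2) = δ^2*(r-1)^2/2 := by field_simp; try ring
          have e2 : δ^4 * (20/δ^2 * ((1/(6*δ^2)) * (r-1)^3) + 20)
              = (10/3)*(r-1)^3 + 20*δ^4 := by field_simp; try ring
          rw [e1, e2]
          nlinarith [pow_nonneg hs0 3, sq_nonneg δ, mul_nonneg (sq_nonneg δ) hsq]
        exact le_of_mul_le_mul_left key (by positivity)
      · have key : δ^4 * (r * ((1/(2*δ^2)) * (r-1)^2))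
            ≤ δ^4 * (20/δ^2 * ((1/(6*δ^2)) * (r-1)^3) + 20) := by
          have e1 : δ^4 * (r * ((1/(2*δ^2)) * (r-1)^2)) = δ^2*(r*(r-1)^2)/2 := by
            field_simp; try ring
          have e2 : δ^4 * (20/δ^2 * ((1/(6*δ^2)) * (r-1)^3) + 20)
              = (10/3)*(r-1)^3 + 20*δ^4 := by field_simp; try ring
          rw [e1, e2]
          nlinarith [pow_nonneg hs0 3, sq_nonneg δ, mul_nonneg (sq_nonneg δ) hsq,
            mul_nonneg (mul_nonneg (show (0:ℝ) ≤ 2-r by linarith) (sq_nonneg δ))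
              (mul_nonneg hs0 hs0)]
        exact le_of_mul_le_mul_left key (by positivity)
    · -- |r| ≤ 1
      refine ⟨by simp <;> positivity, by simp <;> positivity, by simp <;> positivity⟩
    · -- -1-δ < r < -1
      have hu0 : (0:ℝ) ≤ -(r+1) := by linarith
      have huδ : -(r+1) ≤ δ := by linarith
      have hr : r ≤ 0 := by linarith
      have hsq : (0:ℝ) ≤ δ*δ - (r+1)*(r+1) := by nlinarith [mul_self_le_mul_self hu0 huδ]
      have hcube : (0:ℝ) ≤ -((r+1)^3) := by nlinarith [pow_nonneg hu0 3]
      have hφ : -(1/(2*δ^2)) * (r+1)^2 ≤ 0 := by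
        have : (0:ℝ) ≤ (1/(2*δ^2)) * (r+1)^2 := by positivity
        linarith
      rw [abs_of_nonpos hφ, abs_of_nonpos hr,
        abs_of_nonneg (mul_nonneg_of_nonpos_nonpos' hr hφ)]
      refine ⟨?_, ?_, ?_⟩
      · have key : δ^2 * (-(-(1/(2*δ^2)) * (r+1)^2)) ≤ δ^2 * (20/δ^2 * (-r) + 20) := by
          have e1 : δ^2 * (-(-(1/(2*δ^2)) * (r+1)^2)) = (r+1)^2/2 := by field_simp; try ring
          have e2 : δ^2 * (20/δ^2 * (-r) + 20) = 20*(-r) + 20*δ^2 := by field_simp; try ring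
          rw [e1, e2]; nlinarith [sq_nonneg δ]
        exact le_of_mul_le_mul_left key (by positivity)
      · have key : δ^4 * (-(-(1/(2*δ^2)) * (r+1)^2))
            ≤ δ^4 * (20/δ^2 * (-(1/(6*δ^2)) * (r+1)^3) + 20) := by
          have e1 : δ^4 * (-(-(1/(2*δ^2)) * (r+1)^2)) = δ^2*(r+1)^2/2 := by
            field_simp; try ring
          have e2 : δ^4 * (20/δ^2 * (-(1/(6*δ^2)) * (r+1)^3) + 20)
              = -(10/3)*(r+1)^3 + 20*δ^4 := by field_simp; try ring
          rw [e1, e2]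
          nlinarith [hcube, sq_nonneg δ, mul_nonneg (sq_nonneg δ) hsq]
        exact le_of_mul_le_mul_left key (by positivity)
      · have key : δ^4 * (r * (-(1/(2*δ^2)) * (r+1)^2))
            ≤ δ^4 * (20/δ^2 * (-(1/(6*δ^2)) * (r+1)^3) + 20) := by
          have e1 : δ^4 * (r * (-(1/(2*δ^2)) * (r+1)^2)) = -(δ^2*(r*(r+1)^2))/2 := by
            field_simp; try ring
          have e2 : δ^4 * (20/δ^2 * (-(1/(6*δ^2)) * (r+1)^3) + 20)
              = -(10/3)*(r+1)^3 + 20*δ^4 := by field_simp; try ring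
          rw [e1, e2]
          nlinarith [hcube, sq_nonneg δ, mul_nonneg (sq_nonneg δ) hsq,
            mul_nonneg (mul_nonneg (show (0:ℝ) ≤ 2+r by linarith) (sq_nonneg δ))
              (sq_nonneg (r+1))]
        exact le_of_mul_le_mul_left key (by positivity)
    · -- r ≤ -1-δ
      have hy0 : (0:ℝ) ≤ -(r + (1+δ/2)) := by linarith
      have hy2 : (0:ℝ) ≤ -(r + (1+δ/2)) - δ/2 := by linarith
      have hr : r ≤ 0 := by linarith
      have hφ : (1/δ) * (r + (1+δ/2)) ≤ 0 := by
        have : (0:ℝ) ≤ (1/δ) * (-(r + (1+δ/2))) := mul_nonneg (by positivity) hy0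
        nlinarith
      rw [abs_of_nonpos hφ, abs_of_nonpos hr,
        abs_of_nonneg (mul_nonneg_of_nonpos_nonpos' hr hφ)]
      refine ⟨?_, ?_, ?_⟩
      · have key : δ^2 * (-((1/δ) * (r + (1+δ/2)))) ≤ δ^2 * (20/δ^2 * (-r) + 20) := by
          have e1 : δ^2 * (-((1/δ) * (r + (1+δ/2)))) = -(δ*(r + (1+δ/2))) := by
            field_simp; try ring
          have e2 : δ^2 * (20/δ^2 * (-r) + 20) = 20*(-r) + 20*δ^2 := by field_simp; try ring
          rw [e1, e2]; nlinarith
        exact le_of_mul_le_mul_left key (by positivity)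
      · have key : δ^3 * (-((1/δ) * (r + (1+δ/2))))
            ≤ δ^3 * (20/δ^2 * ((1/(2*δ))*(r+(1+δ/2))^2 + δ/24) + 20) := by
          have e1 : δ^3 * (-((1/δ) * (r + (1+δ/2)))) = -(δ^2*(r + (1+δ/2))) := by
            field_simp; try ring
          have e2 : δ^3 * (20/δ^2 * ((1/(2*δ))*(r+(1+δ/2))^2 + δ/24) + 20)
              = 10*(r+(1+δ/2))^2 + (5/6)*δ^2 + 20*δ^3 := by field_simp; try ring
          rw [e1, e2]
          nlinarith [mul_nonneg hy2 hy0, mul_nonneg (mul_nonneg hδ0.le h1δ.le) hy0,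
            mul_nonneg (sq_nonneg δ) hy0, sq_nonneg (r + (1+δ/2))]
        exact le_of_mul_le_mul_left key (by positivity)
      · have key : δ^3 * (r * ((1/δ) * (r + (1+δ/2))))
            ≤ δ^3 * (20/δ^2 * ((1/(2*δ))*(r+(1+δ/2))^2 + δ/24) + 20) := by
          have e1 : δ^3 * (r * ((1/δ) * (r + (1+δ/2)))) = δ^2*(r*(r + (1+δ/2))) := by
            field_simp; try ring
          have e2 : δ^3 * (20/δ^2 * ((1/(2*δ))*(r+(1+δ/2))^2 + δ/24) + 20)
              = 10*(r+(1+δ/2))^2 + (5/6)*δ^2 + 20*δ^3 := by field_simp; try ring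
          rw [e1, e2]
          nlinarith [mul_nonneg hy2 hy0, mul_nonneg hδ0.le (mul_nonneg hy2 hy0),
            mul_nonneg (mul_nonneg h1δ.le hy0) hy0,
            mul_nonneg (mul_nonneg (show (0:ℝ) ≤ 1 - δ*δ by nlinarith) hy0) hy0,
            mul_nonneg (mul_nonneg hδ0.le hδ0.le) hy0, sq_nonneg (r + (1+δ/2))]
        exact le_of_mul_le_mul_left key (by positivity)
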